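/- Let α, β ∈ P^+_N satisfy αα̃ + ββ̃ = 1 on ℂ\{0} and |α(0)|+|β(0)| > 0. Let φ ∈ P^-_N be the unique element such that M(z) := [[1,0],[φ,1]]·[[α,β],[-β̃,α̃]] has only nonnegative powers, and let (α',β') be the unique pair in P^+_N with α'α̃' + β'β̃' = 1, α'(1)=1, β'(1)=0 and [[1,0],[φ,1]]·[[α',β'],[-β̃',α̃']] having only nonnegative powers. Then (α,β) = (α',β')·U where U = [[α(1),β(1)],[-β̃(1),α̃(1)]] is unitary with determinant 1. -/

import Mathlib

open Complex Finset Matrix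

/-- Evaluation of the polynomial `∑_{k=0}^N a_k z^k` (element of `P⁺_N`). -/
noncomputable def pEval {N : ℕ} (a : Fin (N + 1) → ℂ) (z : ℂ) : ℂ :=
  ∑ k : Fin (N + 1), a k * z ^ (k : ℕ)

/-- Evaluation of `p̃(z) = ∑_{k=0}^N conj(a_k) z^{-k}`. -/
noncomputable def pTilde {N : ℕ} (a : Fin (N + 1) → ℂ) (z : ℂ) : ℂ :=
  ∑ k : Fin (N + 1), (starRingEnd ℂ) (a k) * z⁻¹ ^ (k : ℕ)

/-- Evaluation of `φ(z) = ∑_{k=1}^N γ_k z^{-k}` (element of `P⁻_N`). -/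
noncomputable def nEval {N : ℕ} (g : Fin N → ℂ) (z : ℂ) : ℂ :=
  ∑ k : Fin N, g k * z⁻¹ ^ ((k : ℕ) + 1)

/-- A function on `ℂ \ {0}` that coincides with a polynomial in nonnegative powers of `z`. -/
def IsPolyFun (f : ℂ → ℂ) : Prop :=
  ∃ p : Polynomial ℂ, ∀ z : ℂ, z ≠ 0 → f z = p.eval z

section aux

open Polynomial

lemma IsPolyFun.congr' {f f' : ℂ → ℂ} (hf : IsPolyFun f) (h : ∀ z : ℂ, z ≠ 0 → f z = f' z) :
    IsPolyFun f' := by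
  obtain ⟨p, hp⟩ := hf
  exact ⟨p, fun z hz => (h z hz) ▸ hp z hz⟩

lemma IsPolyFun.sub {f g : ℂ → ℂ} (hf : IsPolyFun f) (hg : IsPolyFun g) :
    IsPolyFun (fun z => f z - g z) := by
  obtain ⟨p, hp⟩ := hf; obtain ⟨q, hq⟩ := hg
  exact ⟨p - q, fun z hz => by simp [hp z hz, hq z hz]⟩

lemma IsPolyFun.mul {f g : ℂ → ℂ} (hf : IsPolyFun f) (hg : IsPolyFun g) :
    IsPolyFun (fun z => f z * g z) := by
  obtain ⟨p, hp⟩ := hf; obtain ⟨q, hq⟩ := hg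
  exact ⟨p * q, fun z hz => by simp [hp z hz, hq z hz]⟩

lemma IsPolyFun.neg {f : ℂ → ℂ} (hf : IsPolyFun f) : IsPolyFun (fun z => -f z) := by
  obtain ⟨p, hp⟩ := hf
  exact ⟨-p, fun z hz => by simp [hp z hz]⟩

lemma isPolyFun_pEval {N : ℕ} (a : Fin (N + 1) → ℂ) : IsPolyFun (pEval a) := by
  refine ⟨∑ k : Fin (N + 1), Polynomial.C (a k) * X ^ (k : ℕ), fun z _ => ?_⟩
  simp [pEval, Polynomial.eval_finset_sum]

lemma pTilde_one {N : ℕ} (a : Fin (N + 1) → ℂ) :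
    pTilde a 1 = (starRingEnd ℂ) (pEval a 1) := by
  simp [pTilde, pEval, map_sum]

lemma tilde_pEval {N : ℕ} (a : Fin (N + 1) → ℂ) (z : ℂ) :
    (starRingEnd ℂ) (pEval a ((starRingEnd ℂ) z)⁻¹) = pTilde a z := by
  simp [pEval, pTilde, map_sum, _root_.map_mul, map_pow, map_inv₀]

lemma tilde_pTilde {N : ℕ} (a : Fin (N + 1) → ℂ) (z : ℂ) :
    (starRingEnd ℂ) (pTilde a ((starRingEnd ℂ) z)⁻¹) = pEval a z := by
  simp [pEval, pTilde, map_sum, _root_.map_mul, map_pow, map_inv₀]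

/-- Key lemma: if `f` and its "tilde" `z ↦ conj (f (1/z̄))` are both polynomial functions on
`ℂ \ {0}`, then `f` is constant there. -/
lemma isPolyFun_key {f : ℂ → ℂ} (hf : IsPolyFun f)
    (hTf : IsPolyFun (fun z => (starRingEnd ℂ) (f ((starRingEnd ℂ) z)⁻¹))) :
    ∀ z : ℂ, z ≠ 0 → f z = f 1 := by
  obtain ⟨p, hp⟩ := hf
  obtain ⟨q, hq⟩ := hTf
  set r : Polynomial ℂ := p.map (starRingEnd ℂ) with hr
  set n := r.natDegree with hn
  have hqr : ∀ z : ℂ, z ≠ 0 → q.eval z = r.eval z⁻¹ := by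
    intro z hz
    have hz' : ((starRingEnd ℂ) z)⁻¹ ≠ 0 := by simp [hz]
    have h1 := hq z hz
    simp only at h1
    rw [hp _ hz'] at h1
    rw [← h1, hr, Polynomial.eval_map,
      show z⁻¹ = (starRingEnd ℂ) (((starRingEnd ℂ) z)⁻¹) by simp,
      Polynomial.eval₂_hom]
  set s : Polynomial ℂ := ∑ k ∈ Finset.range (n + 1), Polynomial.C (r.coeff k) * X ^ (n - k)
    with hs
  have hqs : q * X ^ n = s := by
    apply Polynomial.eq_of_infinite_eval_eq
    apply Set.Infinite.mono (s := {(0:ℂ)}ᶜ)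
    · intro z hz
      have hz : z ≠ 0 := hz
      simp only [Set.mem_setOf_eq, Polynomial.eval_mul, Polynomial.eval_pow, Polynomial.eval_X]
      rw [hqr z hz, hs, Polynomial.eval_finset_sum,
        Polynomial.eval_eq_sum_range (p := r) z⁻¹, Finset.sum_mul]
      refine Finset.sum_congr rfl fun i hi => ?_
      have hi' : i ≤ n := Nat.lt_succ_iff.mp (Finset.mem_range.mp hi)
      simp only [Polynomial.eval_mul, Polynomial.eval_pow, Polynomial.eval_C, Polynomial.eval_X]
      rw [show n = (n - i) + i from (Nat.sub_add_cancel hi').symm, pow_add]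
      simp only [Nat.add_sub_cancel]
      field_simp
      rw [mul_assoc, div_pow, one_pow, one_div_mul_cancel (pow_ne_zero i hz), mul_one]
    · exact Set.Finite.infinite_compl (Set.finite_singleton 0)
  have hqc : q = Polynomial.C (q.coeff 0) := by
    by_cases hq0 : q = 0
    · simp [hq0]
    have hdeg : q.natDegree = 0 := by
      have h1 : (q * X ^ n).natDegree = q.natDegree + n :=
        Polynomial.natDegree_mul_X_pow (n := n) hq0
      have h2 : s.natDegree ≤ n := by
        refine Polynomial.natDegree_sum_le_of_forall_le _ _ fun k hk => ?_
        calc (Polynomial.C (r.coeff k) * X ^ (n - k)).natDegree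
            ≤ (Polynomial.C (r.coeff k)).natDegree + (X ^ (n - k) : Polynomial ℂ).natDegree :=
              Polynomial.natDegree_mul_le
          _ ≤ n := by
              simp only [Polynomial.natDegree_C, Polynomial.natDegree_X_pow, zero_add]; omega
      rw [hqs] at h1
      omega
    exact Polynomial.eq_C_of_natDegree_eq_zero hdeg
  have hfc : ∀ z : ℂ, z ≠ 0 → (starRingEnd ℂ) (f z) = q.coeff 0 := by
    intro z hz
    have hw : ((starRingEnd ℂ) z)⁻¹ ≠ 0 := by simp [hz]
    have h1 := hq (((starRingEnd ℂ) z)⁻¹) hw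
    simp only at h1
    rw [hqc] at h1
    simpa using h1
  intro z hz
  exact (starRingEnd ℂ).injective ((hfc z hz).trans (hfc 1 one_ne_zero).symm)

end aux

/-- Corollary 5: if `φ = Π(α,β)` and `(α',β') = ∐(φ)` is the normalized pair, then
`(α,β) = (α',β')·U` where `U = [[α(1),β(1)],[-β̃(1),α̃(1)]]` is unitary of determinant 1. -/
theorem daubechies_corollary5 (N : ℕ) (hN : 1 ≤ N)
    (a b : Fin (N + 1) → ℂ)
    (hunit : ∀ z : ℂ, z ≠ 0 →
      pEval a z * pTilde a z + pEval b z * pTilde b z = 1)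
    (h0 : 0 < ‖pEval a 0‖ + ‖pEval b 0‖)
    (g : Fin N → ℂ)
    (hpoly : ∀ i j : Fin 2, IsPolyFun (fun z =>
      ((!![(1 : ℂ), 0; nEval g z, 1] : Matrix (Fin 2) (Fin 2) ℂ) *
        !![pEval a z, pEval b z; -pTilde b z, pTilde a z]) i j))
    (a' b' : Fin (N + 1) → ℂ)
    (hunit' : ∀ z : ℂ, z ≠ 0 →
      pEval a' z * pTilde a' z + pEval b' z * pTilde b' z = 1)
    (ha'1 : pEval a' 1 = 1) (hb'1 : pEval b' 1 = 0)
    (hpoly' : ∀ i j : Fin 2, IsPolyFun (fun z =>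
      ((!![(1 : ℂ), 0; nEval g z, 1] : Matrix (Fin 2) (Fin 2) ℂ) *
        !![pEval a' z, pEval b' z; -pTilde b' z, pTilde a' z]) i j)) :
    (!![pEval a 1, pEval b 1;
        -(starRingEnd ℂ) (pEval b 1), (starRingEnd ℂ) (pEval a 1)] ∈
      Matrix.unitaryGroup (Fin 2) ℂ) ∧
    (!![pEval a 1, pEval b 1;
        -(starRingEnd ℂ) (pEval b 1), (starRingEnd ℂ) (pEval a 1)]).det = 1 ∧
    ∀ z : ℂ, z ≠ 0 →
      pEval a z = pEval a' z * pEval a 1 + pEval b' z * (-(starRingEnd ℂ) (pEval b 1)) ∧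
      pEval b z = pEval a' z * pEval b 1 + pEval b' z * (starRingEnd ℂ) (pEval a 1) := by
  -- extract the polynomial entries of L·M and L·M'
  have hC : IsPolyFun (fun z => nEval g z * pEval a z - pTilde b z) := by
    refine (hpoly 1 0).congr' fun z hz => ?_
    simp only [Matrix.mul_apply, Fin.sum_univ_two]
    simp [Matrix.cons_val_zero, Matrix.cons_val_one]
    try ring
  have hD : IsPolyFun (fun z => nEval g z * pEval b z + pTilde a z) := by
    refine (hpoly 1 1).congr' fun z hz => ?_
    simp only [Matrix.mul_apply, Fin.sum_univ_two]
    simp [Matrix.cons_val_zero, Matrix.cons_val_one]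
    try ring
  have hC' : IsPolyFun (fun z => nEval g z * pEval a' z - pTilde b' z) := by
    refine (hpoly' 1 0).congr' fun z hz => ?_
    simp only [Matrix.mul_apply, Fin.sum_univ_two]
    simp [Matrix.cons_val_zero, Matrix.cons_val_one]
    try ring
  have hD' : IsPolyFun (fun z => nEval g z * pEval b' z + pTilde a' z) := by
    refine (hpoly' 1 1).congr' fun z hz => ?_
    simp only [Matrix.mul_apply, Fin.sum_univ_two]
    simp [Matrix.cons_val_zero, Matrix.cons_val_one]
    try ring
  have hA := isPolyFun_pEval a
  have hB := isPolyFun_pEval b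
  have hA' := isPolyFun_pEval a'
  have hB' := isPolyFun_pEval b'
  -- the four entries of V = M'⁻¹ M are polynomial functions
  have hF11 : IsPolyFun (fun z => pTilde a' z * pEval a z + pEval b' z * pTilde b z) := by
    refine ((hD'.mul hA).sub (hB'.mul hC)).congr' fun z hz => ?_
    beta_reduce; ring
  have hF12 : IsPolyFun (fun z => pTilde a' z * pEval b z - pEval b' z * pTilde a z) := by
    refine ((hD'.mul hB).sub (hB'.mul hD)).congr' fun z hz => ?_
    beta_reduce; ring
  have hF21 : IsPolyFun (fun z => pTilde b' z * pEval a z - pEval a' z * pTilde b z) := by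
    refine ((hA'.mul hC).sub (hC'.mul hA)).congr' fun z hz => ?_
    beta_reduce; ring
  have hF22 : IsPolyFun (fun z => pTilde b' z * pEval b z + pEval a' z * pTilde a z) := by
    refine ((hA'.mul hD).sub (hC'.mul hB)).congr' fun z hz => ?_
    beta_reduce; ring
  -- constancy of the entries
  have k11 := isPolyFun_key hF11 (hF22.congr' fun z hz => by
    simp only [map_add, _root_.map_mul, tilde_pEval, tilde_pTilde]; ring)
  have k21 := isPolyFun_key hF21 (hF12.neg.congr' fun z hz => by
    simp only [map_sub, _root_.map_mul, tilde_pEval, tilde_pTilde]; ring)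
  have k12 := isPolyFun_key hF12 (hF21.neg.congr' fun z hz => by
    simp only [map_sub, _root_.map_mul, tilde_pEval, tilde_pTilde]; ring)
  have k22 := isPolyFun_key hF22 (hF11.congr' fun z hz => by
    simp only [map_add, _root_.map_mul, tilde_pEval, tilde_pTilde]; ring)
  -- values at 1
  have e11 : pTilde a' 1 * pEval a 1 + pEval b' 1 * pTilde b 1 = pEval a 1 := by
    rw [pTilde_one, pTilde_one, ha'1, hb'1]; simp
  have e21 : pTilde b' 1 * pEval a 1 - pEval a' 1 * pTilde b 1 = -(starRingEnd ℂ) (pEval b 1) := by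
    rw [pTilde_one, pTilde_one, ha'1, hb'1]; simp
  have e12 : pTilde a' 1 * pEval b 1 - pEval b' 1 * pTilde a 1 = pEval b 1 := by
    rw [pTilde_one, pTilde_one, ha'1, hb'1]; simp
  have e22 : pTilde b' 1 * pEval b 1 + pEval a' 1 * pTilde a 1 = (starRingEnd ℂ) (pEval a 1) := by
    rw [pTilde_one, pTilde_one, ha'1, hb'1]; simp
  have h1 : pEval a 1 * (starRingEnd ℂ) (pEval a 1) + pEval b 1 * (starRingEnd ℂ) (pEval b 1)
      = 1 := by
    have := hunit 1 one_ne_zero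
    rwa [pTilde_one, pTilde_one] at this
  refine ⟨?_, ?_, ?_⟩
  · rw [Matrix.mem_unitaryGroup_iff]
    ext i j
    fin_cases i <;> fin_cases j <;>
      simp [Matrix.mul_apply, Matrix.star_apply, Fin.sum_univ_two, Matrix.one_apply]
    · linear_combination h1
    · ring
    · ring
    · linear_combination h1
  · rw [Matrix.det_fin_two_of]
    linear_combination h1
  · intro z hz
    have hu := hunit' z hz
    have K11 := (k11 z hz).trans e11
    have K21 := (k21 z hz).trans e21
    have K12 := (k12 z hz).trans e12
    have K22 := (k22 z hz).trans e22
    constructor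
    · linear_combination pEval a' z * K11 + pEval b' z * K21 - pEval a z * hu
    · linear_combination pEval a' z * K12 + pEval b' z * K22 - pEval b z * hu
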